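/- Monotonicity of glucose in insulin input: if x₁, x₂ : [0,∞) → ℝ are continuous nonnegative functions with x₁(t) ≥ x₂(t) for all t and x₁(t) > x₂(t) on some interval (0, ε), and g₁, g₂ solve ġᵢ = -(xᵢ(t) + G) gᵢ + w(t) with the same initial condition g₁(0) = g₂(0) > 0 and same continuous bounded w ≥ E > 0 and G > 0, then g₁(t) ≤ g₂(t) for all t ≥ 0, with strict inequality for t ∈ (0, ε]. -/

import Mathlib

private lemma int_hasDerivAt (f : ℝ → ℝ) (hf : Continuous f) (t : ℝ) :
    HasDerivAt (fun u => ∫ s in (0:ℝ)..u, f s) (f t) t :=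
  intervalIntegral.integral_hasDerivAt_right (hf.intervalIntegrable 0 t)
    (hf.stronglyMeasurableAtFilter _ _) hf.continuousAt

/-- Monotonicity of glucose in the insulin effectiveness. -/
theorem glucose_monotone_in_insulin
    (G E ε : ℝ) (hG : 0 < G) (hE : 0 < E) (hε : 0 < ε)
    (x₁ x₂ w g₁ g₂ : ℝ → ℝ)
    (hx₁c : Continuous x₁) (hx₂c : Continuous x₂)
    (hx₁nn : ∀ t, 0 ≤ t → 0 ≤ x₁ t) (hx₂nn : ∀ t, 0 ≤ t → 0 ≤ x₂ t)
    (hx₁bd : ∃ C, ∀ t, 0 ≤ t → x₁ t ≤ C) (hx₂bd : ∃ C, ∀ t, 0 ≤ t → x₂ t ≤ C)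
    (hwc : Continuous w) (hwbd : ∃ M, ∀ t, 0 ≤ t → w t ≤ M)
    (hwlb : ∀ t, 0 ≤ t → E ≤ w t)
    (hge : ∀ t, 0 ≤ t → x₂ t ≤ x₁ t)
    (hgt : ∀ t, t ∈ Set.Ioo 0 ε → x₂ t < x₁ t)
    (hode₁ : ∀ t, 0 ≤ t → HasDerivAt g₁ (-(x₁ t + G) * g₁ t + w t) t)
    (hode₂ : ∀ t, 0 ≤ t → HasDerivAt g₂ (-(x₂ t + G) * g₂ t + w t) t)
    (hinit : g₁ 0 = g₂ 0) (hg0 : 0 < g₁ 0) :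
    (∀ t, 0 ≤ t → g₁ t ≤ g₂ t) ∧ ∀ t, t ∈ Set.Ioc 0 ε → g₁ t < g₂ t := by
  set φ₁ : ℝ → ℝ := fun t => Real.exp (∫ s in (0:ℝ)..t, x₁ s + G) with hφ₁def
  set φ₂ : ℝ → ℝ := fun t => Real.exp (∫ s in (0:ℝ)..t, x₂ s + G) with hφ₂def
  have hx₁G : Continuous (fun s => x₁ s + G) := hx₁c.add continuous_const
  have hx₂G : Continuous (fun s => x₂ s + G) := hx₂c.add continuous_const
  have hφ₁ : ∀ t, HasDerivAt φ₁ (φ₁ t * (x₁ t + G)) t := fun t =>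
    (int_hasDerivAt _ hx₁G t).exp
  have hφ₂ : ∀ t, HasDerivAt φ₂ (φ₂ t * (x₂ t + G)) t := fun t =>
    (int_hasDerivAt _ hx₂G t).exp
  have hφ₁pos : ∀ t, 0 < φ₁ t := fun t => Real.exp_pos _
  have hφ₂pos : ∀ t, 0 < φ₂ t := fun t => Real.exp_pos _
  -- positivity of g₁
  set P : ℝ → ℝ := fun t => g₁ t * φ₁ t with hPdef
  have hP : ∀ t, 0 ≤ t → HasDerivAt P (w t * φ₁ t) t := by
    intro t ht
    have := (hode₁ t ht).mul (hφ₁ t)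
    exact this.congr_deriv (by ring)
  have hPmono : MonotoneOn P (Set.Ici (0:ℝ)) := by
    apply monotoneOn_of_deriv_nonneg (convex_Ici 0)
    · exact fun t ht => (hP t ht).continuousAt.continuousWithinAt
    · intro t ht
      rw [interior_Ici] at ht
      exact ((hP t (le_of_lt ht)).differentiableAt).differentiableWithinAt
    · intro t ht
      rw [interior_Ici] at ht
      rw [(hP t (le_of_lt ht)).deriv]
      have hw : 0 < w t := lt_of_lt_of_le hE (hwlb t (le_of_lt ht))
      positivity
  have hP0 : P 0 = g₁ 0 := by
    simp [hPdef, hφ₁def, intervalIntegral.integral_same]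
  have hg₁pos : ∀ t, 0 ≤ t → 0 < g₁ t := by
    intro t ht
    have h := hPmono (Set.self_mem_Ici) (Set.mem_Ici.mpr ht) ht
    rw [hP0] at h
    have h1 : 0 < g₁ t * φ₁ t := lt_of_lt_of_le hg0 h
    nlinarith [hφ₁pos t]
  -- the difference function
  set F : ℝ → ℝ := fun t => (g₂ t - g₁ t) * φ₂ t with hFdef
  have hF : ∀ t, 0 ≤ t → HasDerivAt F ((x₁ t - x₂ t) * g₁ t * φ₂ t) t := by
    intro t ht
    have := ((hode₂ t ht).sub (hode₁ t ht)).mul (hφ₂ t)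
    exact this.congr_deriv (by simp only [Pi.sub_apply]; ring)
  have hF0 : F 0 = 0 := by
    simp [hFdef, hinit]
  have hFmono : MonotoneOn F (Set.Ici (0:ℝ)) := by
    apply monotoneOn_of_deriv_nonneg (convex_Ici 0)
    · exact fun t ht => (hF t ht).continuousAt.continuousWithinAt
    · intro t ht
      rw [interior_Ici] at ht
      exact ((hF t (le_of_lt ht)).differentiableAt).differentiableWithinAt
    · intro t ht
      rw [interior_Ici] at ht
      rw [(hF t (le_of_lt ht)).deriv]
      have h1 : 0 ≤ x₁ t - x₂ t := sub_nonneg.mpr (hge t (le_of_lt ht))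
      have h2 : 0 < g₁ t := hg₁pos t (le_of_lt ht)
      have h3 : 0 < φ₂ t := hφ₂pos t
      positivity
  have hle : ∀ t, 0 ≤ t → g₁ t ≤ g₂ t := by
    intro t ht
    have h := hFmono (Set.self_mem_Ici) (Set.mem_Ici.mpr ht) ht
    rw [hF0] at h
    have h1 : 0 ≤ (g₂ t - g₁ t) * φ₂ t := h
    nlinarith [hφ₂pos t]
  refine ⟨hle, ?_⟩
  have hFstrict : StrictMonoOn F (Set.Icc 0 ε) := by
    apply strictMonoOn_of_deriv_pos (convex_Icc 0 ε)
    · exact fun t ht => (hF t ht.1).continuousAt.continuousWithinAt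
    · intro t ht
      rw [interior_Icc] at ht
      rw [(hF t (le_of_lt ht.1)).deriv]
      have h1 : 0 < x₁ t - x₂ t := sub_pos.mpr (hgt t ht)
      have h2 : 0 < g₁ t := hg₁pos t (le_of_lt ht.1)
      have h3 : 0 < φ₂ t := hφ₂pos t
      positivity
  intro t ht
  have h := hFstrict (Set.left_mem_Icc.mpr (le_of_lt hε)) ⟨le_of_lt ht.1, ht.2⟩ ht.1
  rw [hF0] at h
  have h1 : 0 < (g₂ t - g₁ t) * φ₂ t := h
  nlinarith [hφ₂pos t]
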